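/- For a signed graph Σ = (G, σ) with connected underlying simple graph G, the following are equivalent: (i) Σ is balanced; (ii) the associated signed complete graph K^{Dmax}(Σ) is balanced; (iii) the associated signed complete graph K^{Dmin}(Σ) is balanced; (iv) D^max(Σ) = D^min(Σ) and the (common) associated signed complete graph K^{D±}(Σ) is balanced. -/

import Mathlib

open SimpleGraph

/-- The sign (product of edge signs) of a walk in a graph, computed along its darts. -/
def walkSign {V : Type*} {G : SimpleGraph V} (σ : V → V → ℤ) {u v : V} (p : G.Walk u v) : ℤ :=
  (p.darts.map fun d => σ d.toProd.1 d.toProd.2).prod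

/-- `σ` is a signature on `G`: a symmetric function that is `±1`-valued on edges. -/
def IsSignature {V : Type*} (G : SimpleGraph V) (σ : V → V → ℤ) : Prop :=
  (∀ u v, σ u v = σ v u) ∧ ∀ u v, G.Adj u v → σ u v = 1 ∨ σ u v = -1

/-- A signed graph is balanced when every cycle has sign `+1`. -/
def IsBalanced {V : Type*} (G : SimpleGraph V) (σ : V → V → ℤ) : Prop :=
  ∀ (u : V) (p : G.Walk u u), p.IsCycle → walkSign σ p = 1

/-- A walk is a shortest path when it is a path whose length is the graph distance
between its endpoints. -/
def IsShortestPath {V : Type*} {G : SimpleGraph V} {u v : V} (p : G.Walk u v) : Prop :=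
  p.IsPath ∧ p.length = G.dist u v

open scoped Classical in
/-- `σmax u v = +1` if some shortest `u v`-path is positive, `-1` otherwise. -/
noncomputable def sigmaMax {V : Type*} (G : SimpleGraph V) (σ : V → V → ℤ) (u v : V) : ℤ :=
  if ∃ p : G.Walk u v, IsShortestPath p ∧ walkSign σ p = 1 then 1 else -1

open scoped Classical in
/-- `σmin u v = +1` if all shortest `u v`-paths are positive, `-1` otherwise. -/
noncomputable def sigmaMin {V : Type*} (G : SimpleGraph V) (σ : V → V → ℤ) (u v : V) : ℤ :=
  if ∀ p : G.Walk u v, IsShortestPath p → walkSign σ p = 1 then 1 else -1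

/-- The signed distance matrix `D^max`, with `(u,v)` entry `σmax(u,v)·d(u,v)`. -/
noncomputable def Dmax {V : Type*} (G : SimpleGraph V) (σ : V → V → ℤ) : Matrix V V ℝ :=
  Matrix.of fun u v => (sigmaMax G σ u v : ℝ) * (G.dist u v : ℝ)

/-- The signed distance matrix `D^min`, with `(u,v)` entry `σmin(u,v)·d(u,v)`. -/
noncomputable def Dmin {V : Type*} (G : SimpleGraph V) (σ : V → V → ℤ) : Matrix V V ℝ :=
  Matrix.of fun u v => (sigmaMin G σ u v : ℝ) * (G.dist u v : ℝ)

/-- Two vertices are distance-compatible if all shortest paths between them have the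
same sign. -/
def Compatible {V : Type*} (G : SimpleGraph V) (σ : V → V → ℤ) (u v : V) : Prop :=
  ∀ p q : G.Walk u v, IsShortestPath p → IsShortestPath q → walkSign σ p = walkSign σ q

/-- A signed graph is distance-compatible if every pair of vertices is
distance-compatible. -/
def IsCompatibleGraph {V : Type*} (G : SimpleGraph V) (σ : V → V → ℤ) : Prop :=
  ∀ u v, Compatible G σ u v

/-- The largest eigenvalue of a (symmetric) real matrix: the supremum of the set of real
roots of its characteristic polynomial. -/
noncomputable def largestEigenvalue {n : Type*} [Fintype n] [DecidableEq n]
    (M : Matrix n n ℝ) : ℝ :=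
  sSup {x : ℝ | M.charpoly.IsRoot x}

section AuxSignedGraph

open SimpleGraph Walk

variable {V : Type*} {G : SimpleGraph V} {σ : V → V → ℤ}

@[simp] lemma walkSign_nil {u : V} : walkSign σ (Walk.nil : G.Walk u u) = 1 := rfl

@[simp] lemma walkSign_cons {u v w : V} (h : G.Adj u v) (p : G.Walk v w) :
    walkSign σ (Walk.cons h p) = σ u v * walkSign σ p := by
  simp [walkSign, Walk.darts_cons]

lemma walkSign_append {u v w : V} (p : G.Walk u v) (q : G.Walk v w) :
    walkSign σ (p.append q) = walkSign σ p * walkSign σ q := by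
  simp [walkSign, Walk.darts_append]

lemma walkSign_units (hσ : IsSignature G σ) {u v : V} (p : G.Walk u v) :
    walkSign σ p = 1 ∨ walkSign σ p = -1 := by
  induction p with
  | nil => left; rfl
  | cons h q ih =>
    rw [walkSign_cons]
    rcases hσ.2 _ _ h with h1 | h1 <;> rcases ih with h2 | h2 <;> rw [h1, h2] <;> norm_num

lemma walkSign_reverse (hσ : IsSignature G σ) {u v : V} (p : G.Walk u v) :
    walkSign σ p.reverse = walkSign σ p := by
  induction p with
  | nil => rfl
  | cons h q ih =>
    rw [Walk.reverse_cons, walkSign_append, ih, walkSign_cons, walkSign_cons, walkSign_nil,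
      hσ.1 _ _]
    ring

lemma walkSign_rotate [DecidableEq V] {u : V} {v : V} (c : G.Walk v v) (h : u ∈ c.support) :
    walkSign σ (c.rotate u h) = walkSign σ c := by
  unfold walkSign
  exact (((Walk.rotate_darts c u h).map _).perm).prod_eq

lemma walkSign_length_zero {u v : V} {p : G.Walk u v} (h : p.length = 0) :
    walkSign σ p = 1 := by
  have hd : p.darts = [] :=
    List.eq_nil_of_length_eq_zero (by rw [Walk.length_darts]; exact h)
  rw [walkSign, hd]; rfl

lemma isPath_closed_eq_nil {u : V} {p : G.Walk u u} (hp : p.IsPath) : p = Walk.nil := by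
  cases p with
  | nil => rfl
  | cons h q =>
    rw [Walk.cons_isPath_iff] at hp
    exact absurd (Walk.end_mem_support q) hp.2

lemma path_eq_singleton_of_mem_edges {u v : V} {q : G.Walk v u} (hq : q.IsPath)
    (he : s(u, v) ∈ q.edges) : ∃ h' : G.Adj v u, q = Walk.cons h' Walk.nil := by
  cases q with
  | nil => simp at he
  | cons h r =>
    rename_i w
    rw [Walk.edges_cons, List.mem_cons] at he
    rw [Walk.cons_isPath_iff] at hq
    rcases he with he | he
    · have huw : u = w := by
        rw [Sym2.eq_iff] at he
        rcases he with ⟨h1, h2⟩ | ⟨h1, _⟩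
        · exact h1.trans h2
        · exact h1
      subst huw
      have : r = Walk.nil := isPath_closed_eq_nil hq.1
      subst this
      exact ⟨h, rfl⟩
    · exact absurd (Walk.snd_mem_support_of_mem_edges r he) hq.2

lemma closed_walk_sign (hσ : IsSignature G σ) (hb : IsBalanced G σ) :
    ∀ (n : ℕ) (u : V) (p : G.Walk u u), p.length = n → walkSign σ p = 1 := by
  classical
  intro n
  induction n using Nat.strong_induction_on with
  | _ n ih =>
    intro u p hlen
    by_cases hdup : p.support.tail.Nodup
    · cases p with
      | nil => rfl
      | cons h q =>
        rename_i v
        by_cases hc : (Walk.cons h q).IsCycle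
        · exact hb _ _ hc
        · rw [Walk.cons_isCycle_iff] at hc
          push_neg at hc
          have hqpath : q.IsPath := by
            rw [Walk.isPath_def]
            simpa using hdup
          obtain ⟨h', rfl⟩ := path_eq_singleton_of_mem_edges hqpath (hc hqpath)
          rw [walkSign_cons, walkSign_cons, walkSign_nil, hσ.1 v u]
          rcases hσ.2 _ _ h with h1 | h1 <;> rw [h1] <;> norm_num
    · obtain ⟨w, hw⟩ := List.exists_duplicate_iff_not_nodup.mpr hdup
      have hcount : 2 ≤ p.support.tail.count w := List.duplicate_iff_two_le_count.mp hw
      have hwsup : w ∈ p.support := List.mem_of_mem_tail hw.mem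
      have hsign : walkSign σ (p.rotate w hwsup) = walkSign σ p := walkSign_rotate p hwsup
      have hlen' : (p.rotate w hwsup).length = n := by
        have hpm := (Walk.rotate_darts p w hwsup).perm.length_eq
        rw [Walk.length_darts, Walk.length_darts] at hpm
        rw [hpm, hlen]
      have hcount' : 2 ≤ (p.rotate w hwsup).support.tail.count w := by
        rw [(Walk.support_rotate p w hwsup).perm.count_eq]
        exact hcount
      rw [← hsign]
      generalize (p.rotate w hwsup) = c at hlen' hcount'
      cases c with
      | nil => simp at hcount'
      | cons h2 q2 =>
        rename_i x
        rw [Walk.support_cons, List.tail_cons] at hcount'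
        have hm : w ∈ q2.support := by
          rw [← List.count_pos_iff]
          omega
        have hspec := Walk.take_spec q2 hm
        have hcnt1 : (q2.takeUntil w hm).support.count w = 1 :=
          Walk.count_support_takeUntil_eq_one q2 hm
        have hdtail : 1 ≤ ((q2.dropUntil w hm).support.tail.count w) := by
          have : q2.support = (q2.takeUntil w hm).support ++ (q2.dropUntil w hm).support.tail := by
            rw [← Walk.support_append, hspec]
          rw [this, List.count_append] at hcount'
          omega
        have hdne : (q2.dropUntil w hm).support.tail ≠ [] := by
          intro hnil
          rw [hnil] at hdtail
          simp at hdtail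
        have hdlen : 1 ≤ (q2.dropUntil w hm).length := by
          have h1 := Walk.length_support (q2.dropUntil w hm)
          have h2 := List.length_pos_iff.mpr hdne
          have h3 : (q2.dropUntil w hm).support.tail.length
              = (q2.dropUntil w hm).support.length - 1 := by
            simp [List.length_tail]
          omega
        have hlensum : (q2.takeUntil w hm).length + (q2.dropUntil w hm).length = q2.length := by
          have := congrArg Walk.length hspec
          rwa [Walk.length_append] at this
        have hqlen : q2.length + 1 = n := by
          rw [← hlen']
          simp [Walk.length_cons]
        have s1 : walkSign σ (Walk.cons h2 (q2.takeUntil w hm)) = 1 := by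
          refine ih ((q2.takeUntil w hm).length + 1) (by omega) w _ (by simp [Walk.length_cons])
        have s2 : walkSign σ (q2.dropUntil w hm) = 1 := by
          refine ih ((q2.dropUntil w hm).length) (by omega) w _ rfl
        rw [walkSign_cons] at s1 ⊢
        rw [← hspec, walkSign_append, ← mul_assoc, s1, s2]
        norm_num

lemma exists_theta (hσ : IsSignature G σ) (hG : G.Connected) (hb : IsBalanced G σ) :
    ∃ θ : V → ℤ, (∀ v, θ v = 1 ∨ θ v = -1) ∧
      ∀ (a b : V) (p : G.Walk a b), walkSign σ p = θ a * θ b := by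
  classical
  obtain ⟨r⟩ := hG.nonempty
  refine ⟨fun v => walkSign σ (Classical.choice (hG.preconnected r v)),
    fun v => walkSign_units hσ _, ?_⟩
  intro a b p
  set Wa := Classical.choice (hG.preconnected r a) with hWa
  set Wb := Classical.choice (hG.preconnected r b) with hWb
  have hclosed : walkSign σ (Wa.append (p.append Wb.reverse)) = 1 :=
    closed_walk_sign hσ hb _ r _ rfl
  rw [walkSign_append, walkSign_append, walkSign_reverse hσ] at hclosed
  have ha2 : walkSign σ Wa * walkSign σ Wa = 1 := by
    rcases walkSign_units hσ Wa with h1 | h1 <;> rw [h1] <;> norm_num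
  have hb2 : walkSign σ Wb * walkSign σ Wb = 1 := by
    rcases walkSign_units hσ Wb with h1 | h1 <;> rw [h1] <;> norm_num
  calc walkSign σ p
      = (walkSign σ Wa * walkSign σ Wa) * walkSign σ p * (walkSign σ Wb * walkSign σ Wb) := by
        rw [ha2, hb2]; ring
    _ = walkSign σ Wa * (walkSign σ Wa * (walkSign σ p * walkSign σ Wb)) * walkSign σ Wb := by
        ring
    _ = walkSign σ Wa * 1 * walkSign σ Wb := by rw [hclosed]
    _ = walkSign σ Wa * walkSign σ Wb := by ring

lemma top_balanced_of_theta {τ : V → V → ℤ} (θ : V → ℤ) (hθ : ∀ v, θ v * θ v = 1)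
    (h : ∀ u v, τ u v = θ u * θ v) : IsBalanced (⊤ : SimpleGraph V) τ := by
  have key : ∀ {a b : V} (p : (⊤ : SimpleGraph V).Walk a b), walkSign τ p = θ a * θ b := by
    intro a b p
    induction p with
    | nil => rw [walkSign_nil, hθ]
    | cons had q ih =>
      rename_i c d e
      rw [walkSign_cons, ih, h]
      calc θ c * θ d * (θ d * θ e) = θ c * (θ d * θ d) * θ e := by ring
        _ = θ c * θ e := by rw [hθ d]; ring
  intro u p _
  rw [key p, hθ u]

lemma balanced_of_top_balanced {τ : V → V → ℤ} (hτ : ∀ a b, G.Adj a b → τ a b = σ a b)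
    (hb : IsBalanced (⊤ : SimpleGraph V) τ) : IsBalanced G σ := by
  intro u p hp
  have hsign : ∀ {a b : V} (q : G.Walk a b), walkSign τ (q.mapLe le_top) = walkSign σ q := by
    intro a b q
    induction q with
    | nil => rfl
    | cons h r ih =>
      simp only [Walk.mapLe, Walk.map_cons, walkSign_cons, ih]
      exact congrArg (fun z => z * walkSign σ r) (hτ _ _ h)
  rw [← hsign p]
  exact hb u (p.mapLe le_top) (hp.mapLe le_top)

lemma walk_length_one_sign {u v : V} {p : G.Walk u v} (h1 : p.length = 1) :
    walkSign σ p = σ u v := by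
  cases p with
  | nil => simp at h1
  | cons h q =>
    rename_i w
    have hq0 : q.length = 0 := by
      rw [Walk.length_cons] at h1
      omega
    have hwv : w = v := Walk.eq_of_length_eq_zero hq0
    subst hwv
    rw [walkSign_cons, walkSign_length_zero hq0, mul_one]

lemma sigmaMax_adj (hσ : IsSignature G σ) {u v : V} (h : G.Adj u v) :
    sigmaMax G σ u v = σ u v := by
  classical
  have hd : G.dist u v = 1 := SimpleGraph.dist_eq_one_iff_adj.mpr h
  have hedge : IsShortestPath (Walk.cons h Walk.nil) := by
    constructor
    · rw [Walk.cons_isPath_iff]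
      exact ⟨Walk.IsPath.nil, by simp [h.ne]⟩
    · simp [hd]
  rw [sigmaMax]
  rcases hσ.2 _ _ h with h1 | h1
  · rw [if_pos, h1]
    exact ⟨Walk.cons h Walk.nil, hedge, by rw [walkSign_cons, walkSign_nil, h1]; ring⟩
  · rw [if_neg, h1]
    rintro ⟨p, hsp, hs1⟩
    rw [walk_length_one_sign (hsp.2.trans hd), h1] at hs1
    norm_num at hs1

lemma sigmaMin_adj (hσ : IsSignature G σ) {u v : V} (h : G.Adj u v) :
    sigmaMin G σ u v = σ u v := by
  classical
  have hd : G.dist u v = 1 := SimpleGraph.dist_eq_one_iff_adj.mpr h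
  rw [sigmaMin]
  rcases hσ.2 _ _ h with h1 | h1
  · rw [if_pos, h1]
    intro p hsp
    rw [walk_length_one_sign (hsp.2.trans hd), h1]
  · rw [if_neg, h1]
    intro hall
    have hedge : IsShortestPath (Walk.cons h (Walk.nil : G.Walk v v)) := by
      constructor
      · rw [Walk.cons_isPath_iff]
        exact ⟨Walk.IsPath.nil, by simp [h.ne]⟩
      · simp [hd]
    have := hall _ hedge
    rw [walkSign_cons, walkSign_nil, h1] at this
    norm_num at this

end AuxSignedGraph


/-- For a signed graph `(G, σ)` with connected underlying simple graph,
the following are equivalent: (i) `Σ` is balanced; (ii) the associated signed complete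
graph `K^{Dmax}(Σ)` (the complete graph with edge `uv` signed `σmax(u,v)`) is balanced;
(iii) the associated signed complete graph `K^{Dmin}(Σ)` is balanced; (iv)
`D^max(Σ) = D^min(Σ)` and the common associated signed complete graph `K^{D±}(Σ)` is
balanced. -/
theorem balanced_tfae_assoc_complete {V : Type*} (G : SimpleGraph V) (σ : V → V → ℤ)
    (hσ : IsSignature G σ) (hG : G.Connected) :
    (IsBalanced G σ ↔ IsBalanced (⊤ : SimpleGraph V) (sigmaMax G σ)) ∧
    (IsBalanced G σ ↔ IsBalanced (⊤ : SimpleGraph V) (sigmaMin G σ)) ∧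
    (IsBalanced G σ ↔
      (Dmax G σ = Dmin G σ ∧ IsBalanced (⊤ : SimpleGraph V) (sigmaMax G σ))) := by
  classical
  have fwd : IsBalanced G σ →
      sigmaMax G σ = sigmaMin G σ ∧ IsBalanced (⊤ : SimpleGraph V) (sigmaMax G σ) ∧
        IsBalanced (⊤ : SimpleGraph V) (sigmaMin G σ) := by
    intro hb
    obtain ⟨θ, hθu, hθ2⟩ := exists_theta hσ hG hb
    have hθsq : ∀ v, θ v * θ v = 1 := fun v => by
      rcases hθu v with h | h <;> rw [h] <;> norm_num
    have hmax : ∀ u v, sigmaMax G σ u v = θ u * θ v := by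
      intro u v
      rw [sigmaMax]
      by_cases h : θ u * θ v = 1
      · rw [if_pos, h]
        obtain ⟨p, hp, hl⟩ := hG.exists_path_of_dist u v
        exact ⟨p, ⟨hp, hl⟩, (hθ2 u v p).trans h⟩
      · have h' : θ u * θ v = -1 := by
          rcases hθu u with h1 | h1 <;> rcases hθu v with h2 | h2 <;>
            simp [h1, h2] at h ⊢
        rw [if_neg, h']
        rintro ⟨p, hsp, hs1⟩
        rw [hθ2 u v p] at hs1
        exact h hs1
    have hmin : ∀ u v, sigmaMin G σ u v = θ u * θ v := by
      intro u v
      rw [sigmaMin]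
      by_cases h : θ u * θ v = 1
      · rw [if_pos, h]
        intro p _
        rw [hθ2 u v p, h]
      · have h' : θ u * θ v = -1 := by
          rcases hθu u with h1 | h1 <;> rcases hθu v with h2 | h2 <;>
            simp [h1, h2] at h ⊢
        rw [if_neg, h']
        intro hall
        obtain ⟨p, hp, hl⟩ := hG.exists_path_of_dist u v
        have hone := hall p ⟨hp, hl⟩
        rw [hθ2 u v p] at hone
        exact h hone
    exact ⟨funext fun u => funext fun v => (hmax u v).trans (hmin u v).symm,
      top_balanced_of_theta θ hθsq hmax,
      top_balanced_of_theta θ hθsq hmin⟩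
  have bmax : IsBalanced (⊤ : SimpleGraph V) (sigmaMax G σ) → IsBalanced G σ :=
    balanced_of_top_balanced (fun a b h => sigmaMax_adj hσ h)
  have bmin : IsBalanced (⊤ : SimpleGraph V) (sigmaMin G σ) → IsBalanced G σ :=
    balanced_of_top_balanced (fun a b h => sigmaMin_adj hσ h)
  refine ⟨⟨fun hb => (fwd hb).2.1, bmax⟩, ⟨fun hb => (fwd hb).2.2, bmin⟩,
    ⟨fun hb => ⟨?_, (fwd hb).2.1⟩, fun h => bmax h.2⟩⟩
  unfold Dmax Dmin
  rw [(fwd hb).1]
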